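/- Let C_L be a nonzero purely imaginary quaternion and C ∈ ℍ, and let α(λ) = −C_L⁻¹ · (1 − exp(λ C_L)) · C. Then for all λ ∈ ℝ, ‖α(λ)‖² = (‖C‖² / ‖C_L‖²) · (2 − 2 cos(‖C_L‖ λ)). -/

import Mathlib

open Quaternion

lemma key_norm_sq (CL : ℍ[ℝ]) (hCL : CL ≠ 0) (him : CL.re = 0) (l : ℝ) :
    ‖(1 : ℍ[ℝ]) - NormedSpace.exp (l • CL)‖ ^ 2 = 2 - 2 * Real.cos (‖CL‖ * l) := by
  rcases eq_or_ne l 0 with rfl | hl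
  · simp [NormedSpace.exp_zero]
  have hvre : (l • CL).re = 0 := by simp [him]
  have hθ : ‖l • CL‖ = |l| * ‖CL‖ := by
    rw [norm_smul, Real.norm_eq_abs]
  have hθne : ‖l • CL‖ ≠ 0 := by
    simp [hθ, abs_ne_zero.mpr hl, norm_ne_zero_iff.mpr hCL]
  set θ := ‖l • CL‖ with hθdef
  have hcos : Real.cos θ = Real.cos (‖CL‖ * l) := by
    rw [hθ]
    rcases abs_choice l with h | h
    · rw [h, mul_comm]
    · rw [h, neg_mul, Real.cos_neg, mul_comm]
  rw [Quaternion.exp_of_re_eq_zero _ hvre]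
  have h1 : ((1 : ℍ[ℝ]) - (↑(Real.cos θ) + (Real.sin θ / θ) • (l • CL))) =
      ↑(1 - Real.cos θ) + (-(Real.sin θ / θ)) • (l • CL) := by
    push_cast
    ring_nf
    module
  rw [h1, sq, ← Quaternion.normSq_eq_norm_mul_self, Quaternion.normSq_add,
    Quaternion.normSq_coe, Quaternion.normSq_smul]
  have hv2 : Quaternion.normSq (l • CL) = θ ^ 2 := by
    rw [Quaternion.normSq_eq_norm_mul_self, sq]
  have hcross : (2 * (↑(1 - Real.cos θ) * star (-(Real.sin θ / θ) • l • CL)).re) = 0 := by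
    simp [Quaternion.re_mul, him]
  rw [hv2, hcross, hcos]
  have hsc := Real.sin_sq_add_cos_sq θ
  have : (-(Real.sin θ / θ)) ^ 2 * θ ^ 2 = Real.sin θ ^ 2 := by
    field_simp
  rw [this]
  nlinarith [hsc]

theorem quaternionic_geodesic_norm_sq
    (CL C : ℍ[ℝ]) (hCL : CL ≠ 0) (him : CL.re = 0)
    (α : ℝ → ℍ[ℝ])
    (hα : α = fun l => -(CL⁻¹ * ((1 - NormedSpace.exp (l • CL)) * C))) :
    ∀ l : ℝ, ‖α l‖ ^ 2 = ‖C‖ ^ 2 / ‖CL‖ ^ 2 * (2 - 2 * Real.cos (‖CL‖ * l)) := by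
  intro l
  have hCLn : ‖CL‖ ≠ 0 := norm_ne_zero_iff.mpr hCL
  rw [hα]
  simp only [norm_neg, norm_mul, norm_inv]
  rw [mul_pow, mul_pow, inv_pow, key_norm_sq CL hCL him l]
  ring
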